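/- Let p be a prime, (a_n)_{n≥1} a sequence of complex numbers, and ρ > 0 such that the series ∑_{n≥1} a_n z^n/n converges absolutely for every |z| < ρ. Suppose there are polynomials P, Q ∈ ℂ[z] with Q nonvanishing on the disk {|z| < ρ} such that exp(∑_{n≥1} a_n z^n/n) = P(z)/Q(z) for all |z| < ρ. Then the p-th power of the tame series is rational on the same disk: there exist polynomials A, B ∈ ℂ[z] with B nonvanishing on {|z| < ρ} such that exp(∑_{n≥1, p∤n} a_n z^n/n)^p = A(z)/B(z) for all |z| < ρ. More precisely, with ζ = e^{2πi/p}, for all |z| < ρ one has exp(∑_{p∤n} a_n z^n/n)^p · ∏_{j=0}^{p−1} exp(∑_{n≥1} a_n (ζ^j z)^n/n) = exp(∑_{n≥1} a_n z^n/n)^{2p}·exp(∑_{n≥1} a_n z^n/n)^{−p}, i.e. F*(z)^p · ∏_{j=1}^{p−1} F(ζ^j z) = F(z)^{p−1}, where F(z) = exp(∑ a_n z^n/n) and F*(z) = exp(∑_{p∤n} a_n z^n/n). -/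

import Mathlib

open Complex in
/-- If F(z) = exp(∑ aₙ zⁿ/n) is rational on a disk, then the p-th power of its tame
variant F*(z) = exp(∑_{p∤n} aₙ zⁿ/n) is rational on the same disk; more precisely,
F*(z)^p · ∏_{j=1}^{p−1} F(ζ^j z) = F(z)^{p−1} with ζ = e^{2πi/p}. -/
theorem tame_power_rational (p : ℕ) (hp : p.Prime) (a : ℕ → ℂ) (ρ : ℝ) (hρ : 0 < ρ)
    (hconv : ∀ z : ℂ, ‖z‖ < ρ → Summable (fun n : ℕ => ‖a n * z ^ n / n‖))
    (P Q : Polynomial ℂ) (hQ : ∀ z : ℂ, ‖z‖ < ρ → Q.eval z ≠ 0)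
    (hPQ : ∀ z : ℂ, ‖z‖ < ρ →
      Complex.exp (∑' n : ℕ, a n * z ^ n / n) = P.eval z / Q.eval z) :
    (∃ A B : Polynomial ℂ, (∀ z : ℂ, ‖z‖ < ρ → B.eval z ≠ 0) ∧
      ∀ z : ℂ, ‖z‖ < ρ →
        Complex.exp (∑' n : ℕ, if ¬ p ∣ n then a n * z ^ n / n else 0) ^ p
          = A.eval z / B.eval z) ∧
    (∀ z : ℂ, ‖z‖ < ρ →
      Complex.exp (∑' n : ℕ, if ¬ p ∣ n then a n * z ^ n / n else 0) ^ p *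
        ∏ j ∈ Finset.Icc 1 (p - 1),
          Complex.exp (∑' n : ℕ,
            a n * (Complex.exp (2 * Real.pi * Complex.I / p) ^ j * z) ^ n / n)
        = Complex.exp (∑' n : ℕ, a n * z ^ n / n) ^ (p - 1)) := by
  have hp1 : 1 ≤ p := hp.one_lt.le
  set ζ : ℂ := Complex.exp (2 * Real.pi * Complex.I / p) with hζdef
  have hprim : IsPrimitiveRoot ζ p := Complex.isPrimitiveRoot_exp p hp.ne_zero
  have hζp : ζ ^ p = 1 := hprim.pow_eq_one
  have hζnorm : ‖ζ‖ = 1 := Complex.norm_eq_one_of_pow_eq_one hζp hp.ne_zero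
  have hnormζz : ∀ (j : ℕ) (z : ℂ), ‖ζ ^ j * z‖ = ‖z‖ := by
    intro j z; rw [norm_mul, norm_pow, hζnorm, one_pow, one_mul]
  have key : ∀ z : ℂ, ‖z‖ < ρ →
      Complex.exp (∑' n : ℕ, if ¬ p ∣ n then a n * z ^ n / n else 0) ^ p *
        ∏ j ∈ Finset.Icc 1 (p - 1),
          Complex.exp (∑' n : ℕ, a n * (ζ ^ j * z) ^ n / n)
        = Complex.exp (∑' n : ℕ, a n * z ^ n / n) ^ (p - 1) := by
    intro z hz
    have hf : Summable (fun n : ℕ => a n * z ^ n / n) := Summable.of_norm (hconv z hz)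
    have hfstar : Summable (fun n : ℕ => if ¬ p ∣ n then a n * z ^ n / n else 0) := by
      apply Summable.of_norm
      apply Summable.of_nonneg_of_le (fun n => norm_nonneg _) _ (hconv z hz)
      intro n
      split
      · exact le_refl _
      · simp only [norm_zero]; positivity
    have hg : ∀ j : ℕ, Summable (fun n : ℕ => a n * (ζ ^ j * z) ^ n / n) := by
      intro j
      have hz' : ‖ζ ^ j * z‖ < ρ := by rw [hnormζz]; exact hz
      exact (hconv (ζ ^ j * z) hz').of_norm
    rw [← Complex.exp_nat_mul, ← Complex.exp_nat_mul, ← Complex.exp_sum, ← Complex.exp_add]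
    congr 1
    rw [← tsum_mul_left, ← tsum_mul_left, ← Summable.tsum_finsetSum (fun j _ => hg j),
        ← Summable.tsum_add (hfstar.mul_left _) (summable_sum fun j _ => hg j)]
    apply tsum_congr
    intro n
    have hterm : ∀ j, a n * (ζ ^ j * z) ^ n / n = (ζ ^ n) ^ j * (a n * z ^ n / n) := by
      intro j
      rw [mul_pow, ← pow_mul, ← pow_mul, mul_comm j n]
      ring
    simp_rw [hterm]
    rw [← Finset.sum_mul]
    have hrange : Finset.range p = insert 0 (Finset.Icc 1 (p - 1)) := by
      ext j
      simp only [Finset.mem_range, Finset.mem_insert, Finset.mem_Icc]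
      omega
    have hsum0 : ∑ j ∈ Finset.range p, (ζ ^ n) ^ j =
        1 + ∑ j ∈ Finset.Icc 1 (p - 1), (ζ ^ n) ^ j := by
      rw [hrange, Finset.sum_insert (by simp)]
      simp
    have hcast : ((p - 1 : ℕ) : ℂ) = (p : ℂ) - 1 := by
      push_cast [Nat.cast_sub hp1]; ring
    by_cases hd : p ∣ n
    · have h1 : ζ ^ n = 1 := (hprim.pow_eq_one_iff_dvd n).mpr hd
      have hIcc : ∑ j ∈ Finset.Icc 1 (p - 1), (ζ ^ n) ^ j = (p : ℂ) - 1 := by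
        have := hsum0
        rw [h1] at this ⊢
        simp only [one_pow, Finset.sum_const, nsmul_eq_mul, mul_one] at this ⊢
        rw [Nat.card_Icc]
        push_cast [Nat.cast_sub hp1]
        ring
      rw [hIcc]
      simp only [hd, not_true, if_neg, ite_false]
      rw [hcast]
      simp
    · have h1 : ζ ^ n ≠ 1 := fun h => hd ((hprim.pow_eq_one_iff_dvd n).mp h)
      have hxp : (ζ ^ n) ^ p = 1 := by
        rw [← pow_mul, mul_comm, pow_mul, hζp, one_pow]
      have hgeom : ∑ j ∈ Finset.range p, (ζ ^ n) ^ j = 0 := by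
        rw [geom_sum_eq h1, hxp]
        simp
      have hIcc : ∑ j ∈ Finset.Icc 1 (p - 1), (ζ ^ n) ^ j = -1 := by
        have := hsum0
        rw [hgeom] at this
        linear_combination -this
      rw [hIcc]
      simp only [hd, not_false_iff, if_pos, ite_true]
      rw [hcast]
      ring
  refine ⟨⟨P ^ (p - 1) * ∏ j ∈ Finset.Icc 1 (p - 1), Q.comp (Polynomial.C (ζ ^ j) * Polynomial.X),
          Q ^ (p - 1) * ∏ j ∈ Finset.Icc 1 (p - 1), P.comp (Polynomial.C (ζ ^ j) * Polynomial.X),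
          ?_, ?_⟩, key⟩
  · intro z hz
    have hPne : ∀ j : ℕ, P.eval (ζ ^ j * z) ≠ 0 := by
      intro j h
      have hz' : ‖ζ ^ j * z‖ < ρ := by rw [hnormζz]; exact hz
      have := hPQ _ hz'
      rw [h, zero_div] at this
      exact Complex.exp_ne_zero _ this
    simp only [Polynomial.eval_mul, Polynomial.eval_pow, Polynomial.eval_prod,
      Polynomial.eval_comp, Polynomial.eval_C, Polynomial.eval_X]
    exact mul_ne_zero (pow_ne_zero _ (hQ z hz))
      (Finset.prod_ne_zero_iff.mpr fun j _ => hPne j)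
  · intro z hz
    have hkey := key z hz
    have hzj : ∀ j : ℕ, ‖ζ ^ j * z‖ < ρ := fun j => by rw [hnormζz]; exact hz
    have hPne : ∀ j : ℕ, P.eval (ζ ^ j * z) ≠ 0 := by
      intro j h
      have := hPQ _ (hzj j)
      rw [h, zero_div] at this
      exact Complex.exp_ne_zero _ this
    have hFj : ∀ j ∈ Finset.Icc 1 (p - 1),
        Complex.exp (∑' n : ℕ, a n * (ζ ^ j * z) ^ n / n)
          = P.eval (ζ ^ j * z) / Q.eval (ζ ^ j * z) := fun j _ => hPQ _ (hzj j)
    rw [Finset.prod_congr rfl hFj, hPQ z hz, div_pow, Finset.prod_div_distrib] at hkey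
    simp only [Polynomial.eval_mul, Polynomial.eval_pow, Polynomial.eval_prod,
      Polynomial.eval_comp, Polynomial.eval_C, Polynomial.eval_X]
    have hQz := hQ z hz
    have hQj : (∏ j ∈ Finset.Icc 1 (p - 1), Q.eval (ζ ^ j * z)) ≠ 0 :=
      Finset.prod_ne_zero_iff.mpr fun j _ => hQ _ (hzj j)
    have hPj : (∏ j ∈ Finset.Icc 1 (p - 1), P.eval (ζ ^ j * z)) ≠ 0 :=
      Finset.prod_ne_zero_iff.mpr fun j _ => hPne j
    rw [eq_div_iff (mul_ne_zero (pow_ne_zero _ hQz) hPj)]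
    rw [mul_div_assoc', div_eq_div_iff hQj (pow_ne_zero _ hQz)] at hkey
    simp only [ite_not] at hkey ⊢
    linear_combination hkey
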